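/- Let x₀(ε) denote the unique positive root of arctan(x) = (1−ε)x for ε ∈ (0,1). Then lim_{ε→0⁺} (x₀(ε)² − 3ε)/ε² = 27/5. Equivalently, the principal eigenvalue λ(ε) = D x₀(ε)² satisfies λ(ε) = 3Dε(1 + (9/5)ε) + o(ε²) as ε → 0⁺, which is the two-term expansion λ ∼ (4πD/|Ω|)(1 − 4πDγε)ε with |Ω| = 4π/3 and γ = −9/(20πD). -/

import Mathlib

open Real Filter Set

lemma arctan_le_poly (x : ℝ) (hx : 0 ≤ x) :
    Real.arctan x ≤ x - x^3/3 + x^5/5 := by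
  have hd : ∀ t : ℝ, HasDerivAt (fun t : ℝ => t - t^3/3 + t^5/5 - Real.arctan t)
      (1 - t^2 + t^4 - 1/(1+t^2)) t := by
    intro t
    have h1 := Real.hasDerivAt_arctan t
    have h2 : HasDerivAt (fun t : ℝ => t - t^3/3 + t^5/5) (1 - t^2 + t^4) t := by
      have : HasDerivAt (fun t : ℝ => t - t^3/3 + t^5/5) _ t :=
        ((hasDerivAt_id t).sub ((hasDerivAt_pow 3 t).div_const 3)).add
        ((hasDerivAt_pow 5 t).div_const 5)
      convert this using 1
      push_cast; ring
    exact h2.sub h1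
  have hmono : Monotone (fun t : ℝ => t - t^3/3 + t^5/5 - Real.arctan t) := by
    apply monotone_of_deriv_nonneg
    · exact fun t => (hd t).differentiableAt
    · intro t
      rw [(hd t).deriv]
      have ht : (0:ℝ) < 1 + t^2 := by positivity
      have : 1 - t^2 + t^4 - 1/(1+t^2) = t^6/(1+t^2) := by field_simp; ring
      rw [this]; positivity
  have := hmono hx
  simp [Real.arctan_zero] at this
  linarith

lemma poly_le_arctan (x : ℝ) (hx : 0 ≤ x) :
    x - x^3/3 + x^5/5 - x^7/7 ≤ Real.arctan x := by
  have hd : ∀ t : ℝ, HasDerivAt (fun t : ℝ => Real.arctan t - (t - t^3/3 + t^5/5 - t^7/7))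
      (1/(1+t^2) - (1 - t^2 + t^4 - t^6)) t := by
    intro t
    have h1 := Real.hasDerivAt_arctan t
    have h2 : HasDerivAt (fun t : ℝ => t - t^3/3 + t^5/5 - t^7/7) (1 - t^2 + t^4 - t^6) t := by
      have : HasDerivAt (fun t : ℝ => t - t^3/3 + t^5/5 - t^7/7) _ t :=
        (((hasDerivAt_id t).sub ((hasDerivAt_pow 3 t).div_const 3)).add
        ((hasDerivAt_pow 5 t).div_const 5)).sub ((hasDerivAt_pow 7 t).div_const 7)
      convert this using 1
      push_cast; ring
    exact h1.sub h2
  have hmono : Monotone (fun t : ℝ => Real.arctan t - (t - t^3/3 + t^5/5 - t^7/7)) := by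
    apply monotone_of_deriv_nonneg
    · exact fun t => (hd t).differentiableAt
    · intro t
      rw [(hd t).deriv]
      have ht : (0:ℝ) < 1 + t^2 := by positivity
      have : 1/(1+t^2) - (1 - t^2 + t^4 - t^6) = t^8/(1+t^2) := by field_simp; ring
      rw [this]; positivity
  have := hmono hx
  simp [Real.arctan_zero] at this
  linarith

lemma arctan_le_pi4_mul (x : ℝ) (hx : 1 ≤ x) :
    Real.arctan x ≤ (Real.pi/4) * x := by
  have hd : ∀ t : ℝ, HasDerivAt (fun t : ℝ => (Real.pi/4) * t - Real.arctan t)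
      (Real.pi/4 - 1/(1+t^2)) t := by
    intro t
    have h : HasDerivAt (fun t : ℝ => (Real.pi/4) * t - Real.arctan t) _ t :=
      ((hasDerivAt_id t).const_mul (Real.pi/4)).sub (Real.hasDerivAt_arctan t)
    simpa using h
  have hmono : MonotoneOn (fun t : ℝ => (Real.pi/4) * t - Real.arctan t) (Set.Ici 1) := by
    apply monotoneOn_of_deriv_nonneg (convex_Ici 1)
    · exact (Continuous.continuousOn (by continuity)).sub Real.continuous_arctan.continuousOn
    · exact fun t _ => ((hd t).differentiableAt).differentiableWithinAt
    · intro t ht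
      rw [interior_Ici] at ht
      rw [(hd t).deriv]
      have h1 : (1:ℝ) < t := ht
      have h2 : 1/(1+t^2) ≤ 1/2 := by
        rw [div_le_div_iff₀ (by positivity) (by norm_num)]
        nlinarith
      have := Real.pi_gt_three
      linarith
  have h1 := hmono (Set.self_mem_Ici) hx hx
  simp [Real.arctan_one] at h1
  linarith

set_option maxHeartbeats 1000000 in
theorem principal_eigenvalue_second_order (x : ℝ → ℝ)
    (hx : ∀ ε ∈ Set.Ioo (0:ℝ) 1, 0 < x ε ∧ Real.arctan (x ε) = (1 - ε) * x ε) :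
    Filter.Tendsto (fun ε => ((x ε) ^ 2 - 3 * ε) / ε ^ 2)
      (nhdsWithin 0 (Set.Ioi 0)) (nhds (27 / 5)) ∧
    ∀ D : ℝ, 0 < D →
      Filter.Tendsto
        (fun ε => (D * (x ε) ^ 2 - 3 * D * ε * (1 + (9 / 5) * ε)) / ε ^ 2)
        (nhdsWithin 0 (Set.Ioi 0)) (nhds 0) := by
  have key : ∀ ε ∈ Set.Ioo (0:ℝ) (1/9),
      27/5 - 200*ε ≤ ((x ε)^2 - 3*ε)/ε^2 ∧ ((x ε)^2 - 3*ε)/ε^2 ≤ 27/5 + 200*ε := by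
    intro ε hε
    obtain ⟨hε0, hε9⟩ := hε
    have hε1 : ε < 1 := by linarith
    obtain ⟨hy0, heq⟩ := hx ε ⟨hε0, hε1⟩
    have hy0 : 0 < x ε := hy0
    generalize hxy : x ε = y at *
    -- y ≤ 1
    have hy1 : y ≤ 1 := by
      by_contra h
      push_neg at h
      have h1 : Real.arctan y ≤ (Real.pi/4) * y := arctan_le_pi4_mul y h.le
      rw [heq] at h1
      have hpi := Real.pi_lt_d2
      nlinarith
    have e1 : ε ≥ y^2/3 - y^4/5 := by
      have h1 : Real.arctan y ≤ y - y^3/3 + y^5/5 := arctan_le_poly y hy0.le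
      rw [heq] at h1
      nlinarith [mul_pos hy0 hy0]
    have e2 : ε ≤ y^2/3 - y^4/5 + y^6/7 := by
      have h1 : y - y^3/3 + y^5/5 - y^7/7 ≤ Real.arctan y := poly_le_arctan y hy0.le
      rw [heq] at h1
      nlinarith [mul_pos hy0 hy0]
    have hq : y^2 ≤ 1 := by nlinarith
    have h42 : y^4 ≤ y^2 := by nlinarith [mul_le_mul_of_nonneg_left hq (sq_nonneg y)]
    have h64 : y^6 ≤ y^4 := by
      nlinarith [mul_le_mul_of_nonneg_left hq (by positivity : (0:ℝ) ≤ y^4)]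
    have h2 : y^2 ≤ (15/2)*ε := by linarith
    have h3 : 3*ε ≤ y^2 := by linarith
    constructor
    · rw [le_div_iff₀ (by positivity)]
      have lhs_low : (3/5)*y^4 - (3/7)*y^6 ≤ y^2 - 3*ε := by linarith
      have hsq : 9*ε^2 ≤ y^4 := by
        have h := pow_le_pow_left₀ (by positivity : (0:ℝ) ≤ 3*ε) h3 2
        calc 9*ε^2 = (3*ε)^2 := by ring
          _ ≤ (y^2)^2 := h
          _ = y^4 := by ring
      have hcube : y^6 ≤ (3375/8)*ε^3 := by
        have h := pow_le_pow_left₀ (sq_nonneg y) h2 3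
        calc y^6 = (y^2)^3 := by ring
          _ ≤ ((15/2)*ε)^3 := h
          _ = (3375/8)*ε^3 := by ring
      have hε3 : 0 ≤ ε^3 := by positivity
      have hrw : (27/5 - 200*ε)*ε^2 = 27/5*ε^2 - 200*ε^3 := by ring
      rw [hrw]
      linarith
    · rw [div_le_iff₀ (by positivity)]
      have uh1 : y^2 - 3*ε ≤ (3/5)*y^4 := by linarith
      have hsq2 : y^4 ≤ (225/4)*ε^2 := by
        have h := pow_le_pow_left₀ (sq_nonneg y) h2 2
        calc y^4 = (y^2)^2 := by ring
          _ ≤ ((15/2)*ε)^2 := h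
          _ = (225/4)*ε^2 := by ring
      have h6 : y^2 ≤ 3*ε + (135/4)*ε^2 := by linarith
      have hsq3 : y^4 ≤ (3*ε + (135/4)*ε^2)^2 := by
        have h := pow_le_pow_left₀ (sq_nonneg y) h6 2
        calc y^4 = (y^2)^2 := by ring
          _ ≤ _ := h
      have hc : ε^4 ≤ (1/9)*ε^3 := by
        calc ε^4 = ε^3*ε := by ring
          _ ≤ ε^3*(1/9) := by
              exact mul_le_mul_of_nonneg_left hε9.le (by positivity)
          _ = (1/9)*ε^3 := by ring
      have hexp : (3*ε + (135/4)*ε^2)^2 = 9*ε^2 + (405/2)*ε^3 + (18225/16)*ε^4 := by ring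
      rw [hexp] at hsq3
      have hrw : (27/5 + 200*ε)*ε^2 = 27/5*ε^2 + 200*ε^3 := by ring
      have hε3 : (0:ℝ) ≤ ε^3 := by positivity
      rw [hrw]
      linarith
  have hmem : Set.Ioo (0:ℝ) (1/9) ∈ nhdsWithin 0 (Set.Ioi 0) :=
    Ioo_mem_nhdsGT_of_mem (by constructor <;> norm_num)
  have hlo : Filter.Tendsto (fun ε : ℝ => 27/5 - 200*ε) (nhdsWithin 0 (Set.Ioi 0)) (nhds (27/5)) := by
    have h0 : Filter.Tendsto (fun ε : ℝ => 200*ε) (nhds 0) (nhds 0) := by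
      simpa using (continuous_id.tendsto (0:ℝ)).const_mul (200:ℝ)
    have h : Filter.Tendsto (fun ε : ℝ => 27/5 - 200*ε) (nhds 0) (nhds (27/5)) := by
      simpa using h0.const_sub (27/5 : ℝ)
    exact h.mono_left nhdsWithin_le_nhds
  have hhi : Filter.Tendsto (fun ε : ℝ => 27/5 + 200*ε) (nhdsWithin 0 (Set.Ioi 0)) (nhds (27/5)) := by
    have h0 : Filter.Tendsto (fun ε : ℝ => 200*ε) (nhds 0) (nhds 0) := by
      simpa using (continuous_id.tendsto (0:ℝ)).const_mul (200:ℝ)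
    have h : Filter.Tendsto (fun ε : ℝ => 27/5 + 200*ε) (nhds 0) (nhds (27/5)) := by
      simpa using h0.const_add (27/5 : ℝ)
    exact h.mono_left nhdsWithin_le_nhds
  have hmain : Filter.Tendsto (fun ε => ((x ε) ^ 2 - 3 * ε) / ε ^ 2)
      (nhdsWithin 0 (Set.Ioi 0)) (nhds (27 / 5)) := by
    apply tendsto_of_tendsto_of_tendsto_of_le_of_le' hlo hhi
    · filter_upwards [hmem] with ε hε using (key ε hε).1
    · filter_upwards [hmem] with ε hε using (key ε hε).2
  refine ⟨hmain, fun D hD => ?_⟩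
  have h1 : Filter.Tendsto (fun ε => D * (((x ε) ^ 2 - 3 * ε) / ε ^ 2 - 27/5))
      (nhdsWithin 0 (Set.Ioi 0)) (nhds 0) := by
    have := (hmain.sub (tendsto_const_nhds (x := (27/5:ℝ)))).const_mul D
    simpa using this
  apply h1.congr'
  filter_upwards [self_mem_nhdsWithin] with ε hε
  have hε0 : (0:ℝ) < ε := hε
  have hεne : ε ≠ 0 := ne_of_gt hε0
  field_simp
  ring
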